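/- Let I be a proper ideal of R = C^∞(M,ℝ) of finite codimension. Then dim_ℝ(R/I) = Σ_{y ∈ spec(I)} dim_ℝ(R/(I + 𝔫_y)), the sum ranging over the (finitely many) points of the spectrum of I. -/

import Mathlib

open scoped Manifold
open Module Filter Topology

noncomputable section

/-- The ℝ-algebra of smooth real-valued functions on a manifold `M` modelled on `ℝ^m`. -/
abbrev SmoothFns (m : ℕ) (M : Type*) [TopologicalSpace M]
    [ChartedSpace (EuclideanSpace ℝ (Fin m)) M] : Type _ :=
  C^(⊤ : ℕ∞)⟮𝓡 m, M; 𝓘(ℝ, ℝ), ℝ⟯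

variable {m : ℕ} {M : Type*} [TopologicalSpace M] [T2Space M] [SecondCountableTopology M]
  [ChartedSpace (EuclideanSpace ℝ (Fin m)) M] [IsManifold (𝓡 m) (⊤ : ℕ∞) M]

/-- The ideal `𝔪ₓ` of smooth functions vanishing at the point `x`. -/
def mIdeal (x : M) : Ideal (SmoothFns m M) where
  carrier := {f | f x = 0}
  add_mem' := by intro f g hf hg; simp_all
  zero_mem' := by simp
  smul_mem' := by intro c f hf; simp_all

/-- The ideal `𝔫ₓ` of smooth functions vanishing on some neighbourhood of the point `x`. -/
def nIdeal (x : M) : Ideal (SmoothFns m M) where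
  carrier := {f | ∀ᶠ y in 𝓝 x, f y = 0}
  add_mem' := by
    intro f g hf hg
    filter_upwards [hf, hg] with y h1 h2
    simp [h1, h2]
  zero_mem' := by filter_upwards with y; simp
  smul_mem' := by
    intro c f hf
    filter_upwards [hf] with y h
    simp [h]

/-- The spectrum of an ideal: the set of common zeros of its elements. -/
def idealSpec (I : Ideal (SmoothFns m M)) : Set M :=
  {x : M | ∀ f ∈ I, f x = 0}


section AuxiliaryLemmas

/-- Evaluation at a point as an `ℝ`-algebra homomorphism. -/
def auxEvalA (x : M) : SmoothFns m M →ₐ[ℝ] ℝ :=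
  { ContMDiffMap.evalRingHom x with commutes' := fun _ => rfl }

@[simp] lemma auxEvalA_apply (x : M) (f : SmoothFns m M) : auxEvalA x f = f x := rfl

@[simp] lemma aux_smooth_algebraMap_apply (c : ℝ) (x : M) :
    (algebraMap ℝ (SmoothFns m M) c) x = c := rfl

lemma aux_mem_nIdeal_iff (x : M) (f : SmoothFns m M) :
    f ∈ nIdeal x ↔ ∀ᶠ y in 𝓝 x, f y = 0 :=
  Iff.rfl

lemma aux_exists_properish :
    ∃ f₀ : SmoothFns m M, ∀ b : ℝ, ∃ C : Set M, IsCompact C ∧ ∀ x ∉ C, b < f₀ x := by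
  haveI : LocallyCompactSpace M := Manifold.locallyCompact_of_finiteDimensional (𝓡 m)
  haveI : SigmaCompactSpace M := inferInstance
  set K := CompactExhaustion.choice M with hK
  have Hloc : ∀ x : M, ∃ c : ℝ, ∀ᶠ y in 𝓝 x, c ∈ Set.Ioi ((K.find y : ℝ)) := by
    intro x
    refine ⟨(K.find x : ℝ) + 2, ?_⟩
    have hmem : interior (K (K.find x + 1)) ∈ 𝓝 x :=
      (isOpen_interior).mem_nhds (K.subset_interior_succ _ (K.mem_find x))
    filter_upwards [hmem] with y hy
    have : K.find y ≤ K.find x + 1 := K.mem_iff_find_le.1 (interior_subset hy)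
    have : (K.find y : ℝ) ≤ (K.find x : ℝ) + 1 := by exact_mod_cast this
    simpa using lt_of_le_of_lt this (by linarith)
  obtain ⟨f, hf⟩ := exists_contMDiffMap_forall_mem_convex_of_local_const (𝓡 m) (n := (⊤ : ℕ∞))
      (t := fun x => Set.Ioi ((K.find x : ℝ))) (fun x => convex_Ioi _) Hloc
  refine ⟨f, fun b => ⟨K (Nat.floor (max b 0) + 1), K.isCompact _, fun x hx => ?_⟩⟩
  have h1 : ¬ (K.find x ≤ Nat.floor (max b 0) + 1) := fun h => hx (K.mem_iff_find_le.2 h)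
  push_neg at h1
  have h2 : (max b 0 : ℝ) < K.find x := by
    have h4 : ((Nat.floor (max b 0) + 1 : ℕ) : ℝ) ≤ (K.find x : ℝ) := by exact_mod_cast h1.le
    have h3 : (max b 0 : ℝ) < Nat.floor (max b 0) + 1 := Nat.lt_floor_add_one _
    push_cast at h4
    linarith
  exact lt_of_le_of_lt (le_max_left _ _) (lt_trans h2 (hf x))

lemma aux_exists_smooth_div {g h : SmoothFns m M} {U : Set M} (hU : IsOpen U)
    (hgU : ∀ x ∈ U, g x = 0) (hh : ∀ x ∉ U, h x ≠ 0) :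
    ∃ q : SmoothFns m M, g = h * q := by
  have hq : ContMDiff (𝓡 m) 𝓘(ℝ, ℝ) (⊤ : ℕ∞) (fun x => g x / h x) := by
    intro x
    by_cases hx : h x = 0
    · have hxU : x ∈ U := by by_contra hc; exact hh x hc hx
      have : (fun y => g y / h y) =ᶠ[𝓝 x] fun _ => (0:ℝ) := by
        filter_upwards [hU.mem_nhds hxU] with y hy
        simp [hgU y hy]
      exact (contMDiffAt_const (c := (0:ℝ))).congr_of_eventuallyEq this
    · exact (g.contMDiff x).div₀ (h.contMDiff x) hx
  refine ⟨⟨fun x => g x / h x, hq⟩, ?_⟩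
  ext x
  by_cases hx : h x = 0
  · have hxU : x ∈ U := by by_contra hc; exact hh x hc hx
    show g x = h x * (g x / h x)
    simp [hgU x hxU, hx]
  · show g x = h x * (g x / h x)
    exact (mul_div_cancel₀ (g x) hx).symm

lemma aux_mem_of_vanish_nhds_spec (I : Ideal (SmoothFns m M))
    (hfd : FiniteDimensional ℝ (SmoothFns m M ⧸ I))
    {g : SmoothFns m M} {U : Set M} (hU : IsOpen U) (hsU : idealSpec I ⊆ U)
    (hg : ∀ x ∈ U, g x = 0) : g ∈ I := by
  classical
  obtain ⟨f₀, hf₀⟩ := aux_exists_properish (m := m) (M := M)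
  -- a monic polynomial killing f₀ mod I
  obtain ⟨p, hpmonic, hp⟩ :=
    (Algebra.IsIntegral.of_finite (R := ℝ) (B := SmoothFns m M ⧸ I)).isIntegral
      (Ideal.Quotient.mk I f₀)
  set P : SmoothFns m M := Polynomial.aeval f₀ p with hPdef
  have hPI : P ∈ I := by
    have h1 : Polynomial.aeval ((Ideal.Quotient.mkₐ ℝ I) f₀) p
        = (Ideal.Quotient.mkₐ ℝ I) P := Polynomial.aeval_algHom_apply _ _ _
    rw [← Ideal.Quotient.eq_zero_iff_mem]
    rw [Ideal.Quotient.mkₐ_eq_mk] at h1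
    rw [← h1]
    exact hp
  have hPx : ∀ x : M, P x = Polynomial.eval (f₀ x) p := by
    intro x
    have h1 : Polynomial.aeval (auxEvalA (m := m) x f₀) p = auxEvalA x P :=
      Polynomial.aeval_algHom_apply _ _ _
    rw [Polynomial.coe_aeval_eq_eval] at h1
    simpa using h1.symm
  -- bound on roots
  obtain ⟨b, hb⟩ := (Polynomial.finite_setOf_isRoot hpmonic.ne_zero).bddAbove
  obtain ⟨C, hCcpt, hC⟩ := hf₀ b
  set Z : Set M := {x | P x = 0} with hZdef
  have hZclosed : IsClosed Z := isClosed_eq P.contMDiff.continuous continuous_const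
  have hZC : Z ⊆ C := by
    intro x hx
    by_contra hc
    have hroot : Polynomial.IsRoot p (f₀ x) := by
      rw [Polynomial.IsRoot, ← hPx x]; exact hx
    exact absurd (hb hroot) (not_le.2 (hC x hc))
  have hZcpt : IsCompact Z := hCcpt.of_isClosed_subset hZclosed hZC
  have hKcpt : IsCompact (Z \ U) := hZcpt.diff hU
  -- functions in I nonvanishing at points outside spec
  have hex : ∀ x ∈ Z \ U, ∃ gx : SmoothFns m M, gx ∈ I ∧ gx x ≠ 0 := by
    intro x hx
    have : x ∉ idealSpec I := fun hc => hx.2 (hsU hc)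
    simp only [idealSpec, Set.mem_setOf_eq, not_forall] at this
    obtain ⟨gx, hgx, hgx'⟩ := this
    exact ⟨gx, hgx, hgx'⟩
  choose gfun hgI hgne using hex
  -- finite subcover
  have hcover : Z \ U ⊆ ⋃ i : ↥(Z \ U), {z | gfun i.1 i.2 z ≠ 0} := by
    intro x hx
    exact Set.mem_iUnion.2 ⟨⟨x, hx⟩, hgne x hx⟩
  obtain ⟨t, ht⟩ := hKcpt.elim_finite_subcover (fun i : ↥(Z \ U) => {z | gfun i.1 i.2 z ≠ 0})
    (fun i => (isOpen_ne).preimage (gfun i.1 i.2).contMDiff.continuous) hcover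
  set h : SmoothFns m M := P ^ 2 + ∑ i ∈ t, (gfun i.1 i.2) ^ 2 with hhdef
  have hhI : h ∈ I := by
    refine I.add_mem ?_ (Ideal.sum_mem I fun i _ => ?_)
    · rw [sq]; exact I.mul_mem_left P hPI
    · rw [sq]; exact I.mul_mem_left _ (hgI i.1 i.2)
  have hhval : ∀ x : M, h x = (P x) ^ 2 + ∑ i ∈ t, (gfun i.1 i.2 x) ^ 2 := by
    intro x
    show auxEvalA (m := m) x h = _
    rw [hhdef, map_add, map_pow, map_sum]
    simp
  have hhne : ∀ x ∉ U, h x ≠ 0 := by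
    intro x hxU
    have hsumnn : (0:ℝ) ≤ ∑ i ∈ t, (gfun i.1 i.2 x) ^ 2 :=
      Finset.sum_nonneg fun i _ => sq_nonneg _
    rw [hhval x]
    by_cases hxZ : x ∈ Z
    · have hxK : x ∈ Z \ U := ⟨hxZ, hxU⟩
      obtain ⟨i, hit, hi⟩ := Set.mem_iUnion₂.1 (ht hxK)
      have hpos : (0:ℝ) < ∑ i ∈ t, (gfun i.1 i.2 x) ^ 2 :=
        Finset.sum_pos' (fun j _ => sq_nonneg _) ⟨i, hit, pow_pos (abs_pos.2 hi) 2 |>.trans_le (le_of_eq (sq_abs _))⟩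
      positivity
    · have : P x ≠ 0 := hxZ
      positivity
  obtain ⟨q, hq⟩ := aux_exists_smooth_div hU hg hhne
  rw [hq]
  exact I.mul_mem_right q hhI

/-- Smooth Urysohn lemma packaged for our setting. -/
lemma aux_smooth_urysohn {s t : Set M} (hs : IsClosed s) (ht : IsClosed t) (hd : Disjoint s t) :
    ∃ f : SmoothFns m M, (∀ᶠ x in 𝓝ˢ s, f x = 0) ∧ (∀ᶠ x in 𝓝ˢ t, f x = 1) := by
  haveI : LocallyCompactSpace M := Manifold.locallyCompact_of_finiteDimensional (𝓡 m)
  haveI : SigmaCompactSpace M := inferInstance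
  haveI : TopologicalSpace.MetrizableSpace M := Manifold.metrizableSpace (𝓡 m) M
  letI := TopologicalSpace.metrizableSpaceMetric M
  obtain ⟨f, h0, h1, -⟩ := exists_contMDiffMap_zero_one_nhds_of_isClosed (𝓡 m) (n := (⊤ : ℕ∞)) hs ht hd
  exact ⟨f, h0, h1⟩

lemma aux_spec_finite (I : Ideal (SmoothFns m M))
    (hfd : FiniteDimensional ℝ (SmoothFns m M ⧸ I)) : (idealSpec I).Finite := by
  classical
  by_contra hinf
  rw [← Set.not_infinite, not_not] at hinf
  obtain ⟨s, hsub, hcard⟩ :=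
    hinf.exists_subset_card_eq (finrank ℝ (SmoothFns m M ⧸ I) + 1)
  -- bump functions at the points of s
  have hbump : ∀ i ∈ s, ∃ f : SmoothFns m M,
      f i = 1 ∧ ∀ j ∈ s, j ≠ i → f j = 0 := by
    intro i hi
    have hclosed : IsClosed ((s.erase i : Finset M) : Set M) :=
      (s.erase i).finite_toSet.isClosed
    have hd : Disjoint ((s.erase i : Finset M) : Set M) ({i} : Set M) := by
      simp [Set.disjoint_singleton_right]
    obtain ⟨f, h0, h1⟩ := aux_smooth_urysohn (m := m) hclosed isClosed_singleton hd
    refine ⟨f, h1.self_of_nhdsSet i rfl, fun j hj hji => ?_⟩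
    exact h0.self_of_nhdsSet j (by simp [Finset.mem_erase, hji, hj])
  choose fbump hfb1 hfb0 using hbump
  -- evaluation linear map
  have hker : ∀ (i : M), i ∈ idealSpec I → ∀ a ∈ I, (auxEvalA (m := m) i) a = 0 :=
    fun i hi a ha => hi a ha
  set L : (SmoothFns m M ⧸ I) →ₗ[ℝ] (↥s → ℝ) :=
    LinearMap.pi (fun i : ↥s =>
      (Ideal.Quotient.liftₐ I (auxEvalA i.1) (hker i.1 (hsub i.2))).toLinearMap) with hL
  have hLmk : ∀ (f : SmoothFns m M) (i : ↥s), L (Ideal.Quotient.mk I f) i = f i.1 := by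
    intro f i
    simp [hL, Ideal.Quotient.liftₐ_apply, Ideal.Quotient.lift_mk]
    exact Ideal.Quotient.lift_mk _ _ _
  have hsurj : Function.Surjective L := by
    intro v
    refine ⟨Ideal.Quotient.mk I (∑ i ∈ s.attach, v i • fbump i.1 i.2), ?_⟩
    funext j
    rw [hLmk]
    have : ∀ x : M, (∑ i ∈ s.attach, v i • fbump i.1 i.2) x
        = ∑ i ∈ s.attach, v i * fbump i.1 i.2 x := by
      intro x
      show auxEvalA (m := m) x _ = _
      rw [map_sum]
      simp [Algebra.smul_def]
    rw [this]
    rw [Finset.sum_eq_single j]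
    · simp [hfb1 j.1 j.2]
    · intro b _ hb
      have hbj : b.1 ≠ j.1 := fun hc => hb (Subtype.ext hc)
      rw [hfb0 b.1 b.2 j.1 j.2 hbj.symm, mul_zero]
    · intro h; exact absurd (Finset.mem_attach _ _) h
  have hle := L.finrank_range_le
  rw [LinearMap.range_eq_top.2 hsurj, finrank_top, Module.finrank_pi] at hle
  rw [Fintype.card_coe, hcard] at hle
  omega

lemma aux_coprime_sup_nIdeal (I : Ideal (SmoothFns m M)) {y z : M} (hyz : y ≠ z) :
    IsCoprime (I ⊔ nIdeal y) (I ⊔ nIdeal z) := by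
  rw [Ideal.isCoprime_iff_sup_eq]
  rw [Ideal.eq_top_iff_one]
  obtain ⟨f, h0, h1⟩ := aux_smooth_urysohn (m := m) (isClosed_singleton (x := y))
    (isClosed_singleton (x := z)) (by simp [hyz])
  have hf : f ∈ nIdeal y := by
    rw [aux_mem_nIdeal_iff]
    exact nhdsSet_singleton (x := y) ▸ h0
  have hf1 : (1 : SmoothFns m M) - f ∈ nIdeal z := by
    rw [aux_mem_nIdeal_iff]
    have := nhdsSet_singleton (x := z) ▸ h1
    filter_upwards [this] with w hw
    show 1 - f w = 0
    simp [hw]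
  have h1mem : (1 : SmoothFns m M) = f + (1 - f) := by ring
  rw [h1mem]
  exact Submodule.add_mem _
    (Ideal.mem_sup_left (Ideal.mem_sup_right hf))
    (Ideal.mem_sup_right (Ideal.mem_sup_right hf1))

lemma aux_inf_eq (I : Ideal (SmoothFns m M))
    (hfd : FiniteDimensional ℝ (SmoothFns m M ⧸ I))
    {f : SmoothFns m M} (hf : ∀ y ∈ idealSpec I, f ∈ I ⊔ nIdeal y) : f ∈ I := by
  classical
  have hfin := aux_spec_finite I hfd
  set s := hfin.toFinset with hs
  -- decompose f at each point of the spectrum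
  have hdec : ∀ i ∈ s, ∃ g ∈ I, ∃ h ∈ nIdeal i, f = g + h := by
    intro i hi
    have := hf i (hfin.mem_toFinset.1 hi)
    rw [Submodule.mem_sup] at this
    obtain ⟨g, hg, h, hh, hgh⟩ := this
    exact ⟨g, hg, h, hh, hgh.symm⟩
  choose gdec hgI hdec hhn hfgh using hdec
  -- for each i ∈ s, an open neighborhood where hdec vanishes, avoiding other spec pts
  have hV : ∀ i (hi : i ∈ s), ∃ V : Set M, IsOpen V ∧ i ∈ V ∧
      (∀ x ∈ V, hdec i hi x = 0) ∧ ∀ j ∈ s, j ≠ i → j ∉ V := by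
    intro i hi
    have h1 : ∀ᶠ y in 𝓝 i, hdec i hi y = 0 := hhn i hi
    obtain ⟨V0, hV0sub, hV0open, hV0mem⟩ := eventually_nhds_iff.1 h1
    refine ⟨V0 \ ((s.erase i : Finset M) : Set M), hV0open.sdiff (s.erase i).finite_toSet.isClosed,
      ⟨hV0mem, by simp⟩, fun x hx => hV0sub x hx.1, fun j hj hji hc => hc.2 ?_⟩
    simp [Finset.mem_erase, hji, hj]
  choose V hVopen hVmem hVzero hVavoid using hV
  -- bump functions
  have hphi : ∀ i (hi : i ∈ s), ∃ φ : SmoothFns m M,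
      (∀ᶠ x in 𝓝ˢ (V i hi)ᶜ, φ x = 0) ∧ (∀ᶠ x in 𝓝 i, φ x = 1) := by
    intro i hi
    obtain ⟨φ, h0, h1⟩ := aux_smooth_urysohn (m := m) (isClosed_compl_iff.2 (hVopen i hi))
      (isClosed_singleton (x := i)) (by simp [Set.disjoint_singleton_right, hVmem i hi])
    exact ⟨φ, h0, nhdsSet_singleton (x := i) ▸ h1⟩
  choose φ hφ0 hφ1 using hphi
  -- each φ i * f lies in I
  have hφf : ∀ i (hi : i ∈ s), φ i hi * f ∈ I := by
    intro i hi
    have hzero : φ i hi * hdec i hi = 0 := by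
      ext x
      show φ i hi x * hdec i hi x = 0
      by_cases hx : x ∈ V i hi
      · simp [hVzero i hi x hx]
      · have : φ i hi x = 0 := (hφ0 i hi).self_of_nhdsSet x hx
        simp [this]
    have : φ i hi * f = φ i hi * gdec i hi := by
      rw [hfgh i hi, mul_add, hzero, add_zero]
    rw [this]
    exact I.mul_mem_left _ (hgI i hi)
  -- the remainder vanishes near the spectrum
  set ψ : SmoothFns m M := f - ∑ i ∈ s.attach, φ i.1 i.2 * f with hψ
  have hψnhds : ∀ z ∈ idealSpec I, ∀ᶠ x in 𝓝 z, ψ x = 0 := by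
    intro z hz
    have hzs : z ∈ s := hfin.mem_toFinset.2 hz
    have hother : ∀ i (hi : i ∈ s), i ≠ z → ∀ᶠ x in 𝓝 z, φ i hi x = 0 := by
      intro i hi hiz
      have hzV : z ∈ (V i hi)ᶜ := hVavoid i hi z hzs (Ne.symm hiz)
      exact (hφ0 i hi).filter_mono (nhds_le_nhdsSet hzV)
    have hall : ∀ᶠ x in 𝓝 z, ∀ i ∈ s.attach, i.1 ≠ z → φ i.1 i.2 x = 0 := by
      rw [eventually_all_finset]
      intro i _
      by_cases hiz : i.1 = z
      · simp [hiz]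
      · filter_upwards [hother i.1 i.2 hiz] with x hx
        intro; exact hx
    filter_upwards [hall, hφ1 z hzs] with x hx hx1
    show f x - (∑ i ∈ s.attach, φ i.1 i.2 * f) x = 0
    have hsum : (∑ i ∈ s.attach, φ i.1 i.2 * f) x
        = ∑ i ∈ s.attach, φ i.1 i.2 x * f x := by
      show auxEvalA (m := m) x _ = _
      rw [map_sum]; simp
    rw [hsum, Finset.sum_eq_single (⟨z, hzs⟩ : {x // x ∈ s})]
    · simp [hx1]
    · intro b _ hb
      have hbz : b.1 ≠ z := fun hc => hb (Subtype.ext hc)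
      rw [hx b (Finset.mem_attach _ _) hbz, zero_mul]
    · intro h; exact absurd (Finset.mem_attach _ _) h
  -- ψ vanishes on an open neighborhood of the spectrum
  have hψI : ψ ∈ I := by
    have : ∀ z ∈ idealSpec I, ∃ W : Set M, IsOpen W ∧ z ∈ W ∧ ∀ x ∈ W, ψ x = 0 := by
      intro z hz
      obtain ⟨W, hWsub, hWopen, hWmem⟩ := eventually_nhds_iff.1 (hψnhds z hz)
      exact ⟨W, hWopen, hWmem, hWsub⟩
    choose W hWopen hWmem hWzero using this
    refine aux_mem_of_vanish_nhds_spec I hfd (U := ⋃ (z : M) (hz : z ∈ idealSpec I), W z hz)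
        (isOpen_iUnion fun z => isOpen_iUnion fun hz => hWopen z hz)
        (fun z hz => Set.mem_iUnion.2 ⟨z, Set.mem_iUnion.2 ⟨hz, hWmem z hz⟩⟩) ?_
    intro x hx
    obtain ⟨z, hz, hxz⟩ := by simpa using hx
    exact hWzero z hz x hxz
  have : f = ψ + ∑ i ∈ s.attach, φ i.1 i.2 * f := by rw [hψ]; ring
  rw [this]
  exact I.add_mem hψI (Ideal.sum_mem I fun i _ => hφf i.1 i.2)

end AuxiliaryLemmas

set_option maxHeartbeats 1000000
set_option synthInstance.maxHeartbeats 400000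

/-- For a proper ideal `I` of `R = C^∞(M,ℝ)` of finite codimension,
`dim_ℝ(R/I) = Σ_{y ∈ spec I} dim_ℝ(R/(I + 𝔫_y))`, the sum ranging over the (finitely many)
points of the spectrum of `I`. -/
theorem finrank_quotient_eq_finsum_over_spec
    (I : Ideal (SmoothFns m M)) (hI : I ≠ ⊤)
    (hfd : FiniteDimensional ℝ (SmoothFns m M ⧸ I)) :
    Module.finrank ℝ (SmoothFns m M ⧸ I) =
      ∑ᶠ y ∈ idealSpec I, Module.finrank ℝ (SmoothFns m M ⧸ (I + nIdeal y)) := by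
  classical
  have hfin := aux_spec_finite I hfd
  set s := hfin.toFinset with hs
  set J : ↥s → Ideal (SmoothFns m M) := fun i => I ⊔ nIdeal i.1 with hJ
  have hpair : Pairwise (Function.onFun IsCoprime J) := fun i j hij =>
    aux_coprime_sup_nIdeal I (fun hc => hij (Subtype.ext hc))
  set F : SmoothFns m M →ₐ[ℝ] ((i : ↥s) → SmoothFns m M ⧸ J i) :=
    Pi.algHom ℝ _ (fun i => Ideal.Quotient.mkₐ ℝ (J i)) with hF
  have hFmk : ∀ (f : SmoothFns m M) (i : ↥s), F f i = Ideal.Quotient.mk (J i) f :=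
    fun f i => rfl
  have hFI : ∀ a ∈ I, F a = 0 := by
    intro a ha
    funext i
    show Ideal.Quotient.mk (J i) a = 0
    rw [Ideal.Quotient.eq_zero_iff_mem]
    exact Ideal.mem_sup_left ha
  have hFI' : ∀ a : SmoothFns m M, a ∈ I → F a = 0 := hFI
  set Fbar := Ideal.Quotient.liftₐ I F hFI' with hFbar
  have hFbar_mk : ∀ a : SmoothFns m M, Fbar (Ideal.Quotient.mk I a) = F a := by
    intro a
    rw [hFbar, Ideal.Quotient.liftₐ_apply]
    rfl
  have hinj : Function.Injective Fbar := by
    rw [injective_iff_map_eq_zero]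
    intro a ha
    obtain ⟨f, rfl⟩ := Ideal.Quotient.mk_surjective a
    rw [hFbar_mk] at ha
    rw [Ideal.Quotient.eq_zero_iff_mem]
    refine aux_inf_eq I hfd (fun y hy => ?_)
    have hys : y ∈ s := hfin.mem_toFinset.2 hy
    have : F f ⟨y, hys⟩ = 0 := by rw [ha]; rfl
    rw [hFmk, Ideal.Quotient.eq_zero_iff_mem] at this
    exact this
  have hsurj : Function.Surjective Fbar := by
    intro v
    obtain ⟨z, hz⟩ := Ideal.quotientInfToPiQuotient_surj hpair v
    obtain ⟨f, rfl⟩ := Ideal.Quotient.mk_surjective z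
    refine ⟨Ideal.Quotient.mk I f, ?_⟩
    rw [hFbar_mk]
    funext i
    rw [hFmk]
    rw [← Ideal.quotientInfToPiQuotient_mk' J f i]
    rw [hz]
  set e := AlgEquiv.ofBijective Fbar ⟨hinj, hsurj⟩ with he
  haveI hfdPi : FiniteDimensional ℝ ((i : ↥s) → SmoothFns m M ⧸ J i) :=
    Module.Finite.equiv e.toLinearEquiv
  haveI hfdi : ∀ i : ↥s, FiniteDimensional ℝ (SmoothFns m M ⧸ J i) := by
    intro i
    have hps : Function.Surjective
        ((LinearMap.proj i : ((j : ↥s) → SmoothFns m M ⧸ J j) →ₗ[ℝ] SmoothFns m M ⧸ J i)) := by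
      intro x
      exact ⟨Pi.single i x, by simp⟩
    exact Module.Finite.of_surjective _ hps
  have h1 : Module.finrank ℝ (SmoothFns m M ⧸ I)
      = Module.finrank ℝ ((i : ↥s) → SmoothFns m M ⧸ J i) :=
    e.toLinearEquiv.finrank_eq
  rw [h1, Module.finrank_pi_fintype]
  have h3 : (∑ i : ↥s, Module.finrank ℝ (SmoothFns m M ⧸ J i))
      = ∑ y ∈ s, Module.finrank ℝ (SmoothFns m M ⧸ (I + nIdeal y)) := by
    rw [← Finset.sum_coe_sort s (fun y => Module.finrank ℝ (SmoothFns m M ⧸ (I + nIdeal y)))]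
    refine Finset.sum_congr rfl fun i _ => ?_
    rw [hJ, Submodule.add_eq_sup]
  rw [h3, ← finsum_mem_coe_finset]
  rw [hs, hfin.coe_toFinset]
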